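/- Let G be a weighted cycle graph with n+1 vertices and n+1 edges arranged in a single directed cycle with edge lengths ℓ₀, …, ℓ_n satisfying Σ ℓ_j = 1. Then J(G) is isomorphic to the subgroup (ℤℓ₀ + ⋯ + ℤℓ_n)/ℤ of ℝ/ℤ. In particular, if ℓ₀, …, ℓ_n are all rational then J(G) is finite, and if ℓ₀, …, ℓ_n are ℚ-linearly independent then J(G) is free abelian of rank n. -/

import Mathlib

/-- A finite weighted (multi)graph with a fixed orientation of the edges:
vertex type `V`, edge type `E`, tail/head maps and a positive length function. -/
structure WGraph where
  V : Type
  E : Type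
  [fV : Fintype V]
  [fE : Fintype E]
  [dV : DecidableEq V]
  [dE : DecidableEq E]
  tail : E → V
  head : E → V
  len : E → ℝ
  len_pos : ∀ e, 0 < len e

attribute [instance] WGraph.fV WGraph.fE WGraph.dV WGraph.dE

namespace WGraph

variable (G : WGraph)

/-- Two vertices are adjacent if some edge joins them (in either direction). -/
def Adj (x y : G.V) : Prop :=
  ∃ e, (G.tail e = x ∧ G.head e = y) ∨ (G.tail e = y ∧ G.head e = x)

/-- A weighted graph is connected if any two vertices are joined by a walk. -/
def Connected : Prop := ∀ x y : G.V, Relation.ReflTransGen G.Adj x y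

/-- The differential `d : C_0(G,ℝ) → C_1(G,ℝ)`, `(df)(e) = (f(e⁺) - f(e⁻))/ℓ(e)`. -/
noncomputable def d (f : G.V → ℝ) : G.E → ℝ :=
  fun e => (f (G.head e) - f (G.tail e)) / G.len e

/-- The adjoint `d* : C_1(G,ℝ) → C_0(G,ℝ)`,
`(d*α)(x) = Σ_{e⁺ = x} α(e) - Σ_{e⁻ = x} α(e)`. -/
def dStar (α : G.E → ℝ) : G.V → ℝ := fun x =>
  (∑ e ∈ Finset.univ.filter fun e => G.head e = x, α e) -
    ∑ e ∈ Finset.univ.filter fun e => G.tail e = x, α e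

/-- The inner product `⟨α,β⟩ = Σ_e α(e) β(e) ℓ(e)` on real 1-chains. -/
noncomputable def ip (α β : G.E → ℝ) : ℝ := ∑ e, α e * β e * G.len e

/-- Real 1-cycles: the kernel of `d*`. -/
def IsCycle (α : G.E → ℝ) : Prop := ∀ x, G.dStar α x = 0

/-- Exact 1-chains: the image of `d`. -/
def IsExact (α : G.E → ℝ) : Prop := ∃ f : G.V → ℝ, α = G.d f

/-- A 1-form `ω = Σ ω_e de` (recorded by its coefficients) is harmonic if at every
vertex the incoming and outgoing coefficients sum to the same value. -/
def Harmonic (ω : G.E → ℝ) : Prop :=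
  ∀ x, (∑ e ∈ Finset.univ.filter fun e => G.head e = x, ω e) =
    ∑ e ∈ Finset.univ.filter fun e => G.tail e = x, ω e

/-- Integration of the 1-form `ω` along the 1-chain `α`: `∫_α ω = Σ_e ω_e α(e) ℓ(e)`. -/
noncomputable def intPair (ω α : G.E → ℝ) : ℝ := ∑ e, ω e * α e * G.len e

/-- `d*` on integral 1-chains. -/
def dStarZ (α : G.E → ℤ) : G.V → ℤ := fun x =>
  (∑ e ∈ Finset.univ.filter fun e => G.head e = x, α e) -
    ∑ e ∈ Finset.univ.filter fun e => G.tail e = x, α e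

/-- Integral 1-cycles. -/
def IsCycleZ (α : G.E → ℤ) : Prop := ∀ x, G.dStarZ α x = 0

/-- `α ∈ im(d)_ℤ`: `α` is an integral 1-chain which is the differential of a real
function on the vertices (a function with integer slopes). -/
def IsExactZ (α : G.E → ℤ) : Prop :=
  ∃ f : G.V → ℝ, ∀ e, (α e : ℝ) = G.d f e

/-- The subgroup `H_1(G,ℤ) ⊕ im(d)_ℤ` of `C_1(G,ℤ)`, i.e. the subgroup generated by
integral cycles together with integral exact chains. -/
def jacRel : AddSubgroup (G.E → ℤ) :=
  AddSubgroup.closure {α | G.IsCycleZ α ∨ G.IsExactZ α}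

/-- The Jacobian group of a weighted graph: `J(G) = C_1(G,ℤ)/(H_1(G,ℤ) ⊕ im(d)_ℤ)`. -/
def Jac := (G.E → ℤ) ⧸ G.jacRel

noncomputable instance : AddCommGroup G.Jac :=
  inferInstanceAs (AddCommGroup ((G.E → ℤ) ⧸ G.jacRel))

/-- Divisors of degree zero. -/
def Div0 : AddSubgroup (G.V → ℤ) where
  carrier := {D | ∑ x, D x = 0}
  add_mem' := by
    intro a b ha hb
    simp only [Set.mem_setOf_eq] at *
    simp [Finset.sum_add_distrib, ha, hb]
  zero_mem' := by simp
  neg_mem' := by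
    intro a ha
    simp only [Set.mem_setOf_eq] at *
    simp [ha]

/-- `d*` as a group homomorphism on integral 1-chains. -/
def dStarZHom : (G.E → ℤ) →+ (G.V → ℤ) where
  toFun := G.dStarZ
  map_zero' := by funext x; simp [dStarZ]
  map_add' := by
    intro a b
    funext x
    simp [dStarZ, Finset.sum_add_distrib]
    ring

/-- The subgroup `im(d)_ℤ` of `C_1(G,ℤ)`. -/
def imdZ : AddSubgroup (G.E → ℤ) where
  carrier := {α | G.IsExactZ α}
  add_mem' := by
    rintro a b ⟨f, hf⟩ ⟨g, hg⟩
    exact ⟨f + g, fun e => by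
      simp only [Pi.add_apply, Int.cast_add, hf e, hg e, d]; ring⟩
  zero_mem' := ⟨0, fun e => by simp [d]⟩
  neg_mem' := by
    rintro a ⟨f, hf⟩
    exact ⟨-f, fun e => by
      simp only [Pi.neg_apply, Int.cast_neg, hf e, d]; ring⟩

/-- Principal divisors: `Prin(G) = d*(im(d)_ℤ)`. -/
def Prin : AddSubgroup (G.V → ℤ) := G.imdZ.map G.dStarZHom

lemma sum_dStarZ (α : G.E → ℤ) : ∑ x, G.dStarZ α x = 0 := by
  simp only [dStarZ, Finset.sum_sub_distrib]
  rw [Finset.sum_fiberwise, Finset.sum_fiberwise]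
  simp

/-- The degree-zero Picard group `Pic(G) = Div⁰(G)/Prin(G)`. -/
def PicZ := G.Div0 ⧸ (G.Prin.addSubgroupOf G.Div0)

noncomputable instance : AddCommGroup G.PicZ :=
  inferInstanceAs (AddCommGroup (G.Div0 ⧸ (G.Prin.addSubgroupOf G.Div0)))

/-- The weighted graph obtained by deleting the edge `e₀`. -/
def delEdge (e₀ : G.E) : WGraph where
  V := G.V
  E := {e : G.E // e ≠ e₀}
  tail := fun e => G.tail e.1
  head := fun e => G.head e.1
  len := fun e => G.len e.1
  len_pos := fun e => G.len_pos e.1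

/-- An edge is a bridge if deleting it disconnects the graph. -/
def IsBridge (e₀ : G.E) : Prop := ¬ (G.delEdge e₀).Connected

/-- The weighted graph obtained by deleting a vertex `z` (and all incident edges). -/
def delVertex (z : G.V) : WGraph where
  V := {x : G.V // x ≠ z}
  E := {e : G.E // G.tail e ≠ z ∧ G.head e ≠ z}
  tail := fun e => ⟨G.tail e.1, e.2.1⟩
  head := fun e => ⟨G.head e.1, e.2.2⟩
  len := fun e => G.len e.1
  len_pos := fun e => G.len_pos e.1

open scoped Classical in
/-- The (discrete) potential kernel: `jKer z y` is the function `f` with `f(z) = 0`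
and `Δf = δ_y - δ_z` (when such a function exists; it is unique on a
connected graph). -/
noncomputable def jKer (z y : G.V) : G.V → ℝ :=
  if h : ∃ f : G.V → ℝ, f z = 0 ∧ ∀ w, G.dStar (G.d f) w =
      (if w = y then 1 else 0) - (if w = z then 1 else 0)
  then h.choose else 0

/-- Connectivity using only the edges in `S`. -/
def ConnectedOn (S : Finset G.E) : Prop :=
  ∀ x y : G.V, Relation.ReflTransGen
    (fun a b => ∃ e ∈ S, (G.tail e = a ∧ G.head e = b) ∨ (G.tail e = b ∧ G.head e = a)) x y

/-- A spanning tree: a spanning connected edge set with `#V - 1` edges. -/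
def IsSpanningTree (T : Finset G.E) : Prop :=
  G.ConnectedOn T ∧ T.card + 1 = Fintype.card G.V

/-- The weight `w(T) = Π_{e ∉ T} ℓ(e)` of a spanning tree. -/
noncomputable def wt (T : Finset G.E) : ℝ := ∏ e ∈ Finset.univ \ T, G.len e

open scoped Classical in
/-- `w(G) = Σ_T w(T)`, summed over all spanning trees. -/
noncomputable def wG : ℝ := ∑ T : Finset G.E, if G.IsSpanningTree T then G.wt T else 0

open scoped Classical in
/-- The Foster coefficient `F(e) = (1/w(G)) Σ_{T : e ∉ T} w(T)`. -/
noncomputable def foster (e : G.E) : ℝ :=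
  (1 / G.wG) * ∑ T : Finset G.E, if G.IsSpanningTree T ∧ e ∉ T then G.wt T else 0

open scoped Classical in
/-- The fundamental cycle `α_{T,e}`: the unique 1-cycle supported on `T ∪ {e}` taking
the value `1` on `e`; by convention it is `0` when no such cycle exists
(e.g. when `e ∈ T`). -/
noncomputable def fundCycle (T : Finset G.E) (e : G.E) : G.E → ℝ :=
  if h : ∃ α : G.E → ℝ, G.IsCycle α ∧ α e = 1 ∧ ∀ f, f ∉ T → f ≠ e → α f = 0
  then h.choose else 0

end WGraph

/-- The weighted cycle graph on `n+1` vertices, oriented cyclically, with edge `i`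
going from vertex `i` to vertex `i+1` and having length `ℓ i`. -/
def cycleGraph (n : ℕ) (ℓ : Fin (n + 1) → ℝ) (hpos : ∀ i, 0 < ℓ i) : WGraph where
  V := Fin (n + 1)
  E := Fin (n + 1)
  tail := id
  head := fun i => i + 1
  len := ℓ
  len_pos := hpos


section CycleAux

open WGraph

variable {n : ℕ} {ℓ : Fin (n + 1) → ℝ} {hpos : ∀ i, 0 < ℓ i}

lemma cg_dStarZ (α : Fin (n + 1) → ℤ) (x : Fin (n + 1)) :
    (cycleGraph n ℓ hpos).dStarZ α x = α (x - 1) - α x := by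
  show (∑ e ∈ Finset.univ.filter fun e : Fin (n + 1) => e + 1 = x, α e) -
      (∑ e ∈ Finset.univ.filter fun e : Fin (n + 1) => e = x, α e) = _
  congr 1
  · have h1 : (Finset.univ.filter fun e : Fin (n + 1) => e + 1 = x) = {x - 1} := by
      ext e; simp [eq_sub_iff_add_eq]
    rw [h1, Finset.sum_singleton]
  · have h2 : (Finset.univ.filter fun e : Fin (n + 1) => e = x) = {x} := by
      ext e; simp
    rw [h2, Finset.sum_singleton]

open Fin.NatCast in
lemma cg_cycle_const (α : Fin (n + 1) → ℤ)
    (h : (cycleGraph n ℓ hpos).IsCycleZ α) : ∀ x, α x = α 0 := by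
  have key : ∀ y : Fin (n + 1), α (y + 1) = α y := by
    intro y
    have h1 := h (y + 1)
    erw [cg_dStarZ (hpos := hpos), add_sub_cancel_right] at h1
    exact (sub_eq_zero.mp h1).symm
  have key2 : ∀ k : ℕ, α (k : Fin (n + 1)) = α 0 := by
    intro k
    induction k with
    | zero => norm_num
    | succ k ih => rw [Nat.cast_succ, key, ih]
  intro x
  have hx := key2 x.val
  rwa [Fin.cast_val_eq_self] at hx

lemma cg_exact_sum (α : Fin (n + 1) → ℤ)
    (h : (cycleGraph n ℓ hpos).IsExactZ α) : ∑ i, (α i : ℝ) * ℓ i = 0 := by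
  obtain ⟨f, hf⟩ := h
  have h2 : ∀ e : Fin (n + 1), (α e : ℝ) * ℓ e = f (e + 1) - f e := by
    intro e
    have h1 := hf e
    rw [show (cycleGraph n ℓ hpos).d f e = (f (e + 1) - f e) / ℓ e from rfl,
      eq_div_iff (hpos e).ne'] at h1
    exact h1
  have h3 : ∑ i : Fin (n + 1), f (i + 1) = ∑ i : Fin (n + 1), f i :=
    Fintype.sum_equiv (Equiv.addRight (1 : Fin (n + 1))) _ _ (fun i => rfl)
  calc ∑ i, (α i : ℝ) * ℓ i = ∑ i : Fin (n + 1), (f (i + 1) - f i) :=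
        Finset.sum_congr rfl fun i _ => h2 i
    _ = 0 := (Finset.sum_sub_distrib _ _).trans (sub_eq_zero.mpr h3)

lemma cg_exact_of_sum (α : Fin (n + 1) → ℤ)
    (h : ∑ i, (α i : ℝ) * ℓ i = 0) : (cycleGraph n ℓ hpos).IsExactZ α := by
  set g : ℕ → ℝ := fun j => if hj : j < n + 1 then (α ⟨j, hj⟩ : ℝ) * ℓ ⟨j, hj⟩ else 0 with hgdef
  have hgval : ∀ e : Fin (n + 1), g e.val = (α e : ℝ) * ℓ e := by
    intro e
    simp only [hgdef, e.isLt, dif_pos, Fin.eta]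
  have hgtot : ∑ j ∈ Finset.range (n + 1), g j = 0 := by
    rw [← Fin.sum_univ_eq_sum_range, ← h]
    exact Finset.sum_congr rfl fun i _ => hgval i
  refine ⟨fun x => ∑ j ∈ Finset.range x.val, g j, ?_⟩
  show ∀ e : Fin (n + 1), (α e : ℝ) =
    ((∑ j ∈ Finset.range ((e + 1 : Fin (n + 1))).val, g j) -
      ∑ j ∈ Finset.range e.val, g j) / ℓ e
  intro e
  rw [eq_div_iff (hpos e).ne']
  rcases eq_or_lt_of_le (Nat.lt_succ_iff.mp e.isLt) with he | he
  · -- e is the last vertex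
    have hlast : e = Fin.last n := Fin.ext he
    have h0 : ((e + 1 : Fin (n + 1))).val = 0 := by
      rw [hlast, Fin.last_add_one]; rfl
    rw [h0]
    simp only [Finset.range_zero, Finset.sum_empty]
    have hstep := Finset.sum_range_succ g n
    rw [hgtot] at hstep
    have hge : g n = (α e : ℝ) * ℓ e := by rw [← hgval e, he]
    have hval : e.val = n := he
    rw [hval]
    linarith [hstep, hge]
  · -- not the last vertex
    have hne : e ≠ Fin.last n := by
      intro hcontra
      rw [hcontra, Fin.val_last] at he
      exact lt_irrefl _ he
    have hsucc : ((e + 1 : Fin (n + 1))).val = e.val + 1 := by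
      rw [Fin.val_add_one, if_neg hne]
    rw [hsucc, Finset.sum_range_succ, hgval e]
    ring

/-- The pairing `α ↦ Σ αᵢ ℓᵢ mod 1` as a homomorphism to the circle. -/
noncomputable def cgPhi (n : ℕ) (ℓ : Fin (n + 1) → ℝ) :
    (Fin (n + 1) → ℤ) →+ AddCircle (1 : ℝ) where
  toFun α := ((∑ i, (α i : ℝ) * ℓ i : ℝ) : AddCircle (1 : ℝ))
  map_zero' := by norm_num
  map_add' a b := by
    have h : (∑ i, ((a + b) i : ℝ) * ℓ i)
        = (∑ i, (a i : ℝ) * ℓ i) + ∑ i, (b i : ℝ) * ℓ i := by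
      rw [← Finset.sum_add_distrib]
      refine Finset.sum_congr rfl fun i _ => ?_
      simp only [Pi.add_apply]
      push_cast
      ring
    simp only [h, AddCircle.coe_add]

lemma cgPhi_ker_iff (n : ℕ) (ℓ : Fin (n + 1) → ℝ) (α : Fin (n + 1) → ℤ) :
    α ∈ (cgPhi n ℓ).ker ↔ ∃ m : ℤ, (m : ℝ) = ∑ i, (α i : ℝ) * ℓ i := by
  rw [AddMonoidHom.mem_ker]
  show ((∑ i, (α i : ℝ) * ℓ i : ℝ) : AddCircle (1 : ℝ)) = 0 ↔ _
  rw [AddCircle.coe_eq_zero_iff]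
  simp [zsmul_eq_mul]

lemma cg_jacRel_eq (n : ℕ) (ℓ : Fin (n + 1) → ℝ) (hpos : ∀ i, 0 < ℓ i)
    (hsum : ∑ i, ℓ i = 1) :
    (cycleGraph n ℓ hpos).jacRel = (cgPhi n ℓ).ker := by
  apply le_antisymm
  · erw [WGraph.jacRel, AddSubgroup.closure_le]
    rintro α hmem
    change Fin (n + 1) → ℤ at α
    rcases hmem with hc | he
    · have hconst := cg_cycle_const (hpos := hpos) α hc
      erw [SetLike.mem_coe, cgPhi_ker_iff]
      refine ⟨α 0, ?_⟩
      calc ((α 0 : ℤ) : ℝ) = (α 0 : ℝ) * ∑ i, ℓ i := by rw [hsum, mul_one]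
        _ = ∑ i, (α i : ℝ) * ℓ i := by
            rw [Finset.mul_sum]
            exact Finset.sum_congr rfl fun i _ => by rw [hconst i]
    · erw [SetLike.mem_coe, cgPhi_ker_iff]
      exact ⟨0, by rw [cg_exact_sum (hpos := hpos) α he]; norm_num⟩
  · intro α hα
    change Fin (n + 1) → ℤ at α
    obtain ⟨m, hm⟩ := (cgPhi_ker_iff n ℓ α).mp hα
    have h1 : (cycleGraph n ℓ hpos).IsCycleZ (fun _ => m) := by
      intro x
      erw [cg_dStarZ (hpos := hpos), sub_self]
    have h2 : (cycleGraph n ℓ hpos).IsExactZ (α - (fun _ => m : Fin (n + 1) → ℤ)) := by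
      apply cg_exact_of_sum (hpos := hpos)
      have hterm : ∀ i, (((α - (fun _ => m : Fin (n + 1) → ℤ)) i : ℤ) : ℝ) * ℓ i
          = (α i : ℝ) * ℓ i - (m : ℝ) * ℓ i := by
        intro i
        simp only [Pi.sub_apply]
        push_cast
        ring
      rw [Finset.sum_congr rfl fun i _ => hterm i, Finset.sum_sub_distrib,
        ← Finset.mul_sum, hsum, ← hm]
      ring
    have hsplit : α = (fun _ => m : Fin (n + 1) → ℤ) + (α - (fun _ => m : Fin (n + 1) → ℤ)) := by
      funext i; simp
    rw [hsplit]
    exact add_mem (AddSubgroup.subset_closure (Or.inl h1))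
      (AddSubgroup.subset_closure (Or.inr h2))

lemma cgPhi_range (n : ℕ) (ℓ : Fin (n + 1) → ℝ) :
    (cgPhi n ℓ).range
      = AddSubgroup.closure (Set.range fun i => ((ℓ i : ℝ) : AddCircle (1 : ℝ))) := by
  apply le_antisymm
  · rintro x ⟨α, rfl⟩
    have hx : cgPhi n ℓ α = ∑ i, α i • ((ℓ i : ℝ) : AddCircle (1 : ℝ)) := by
      show ((∑ i, (α i : ℝ) * ℓ i : ℝ) : AddCircle (1 : ℝ)) = _
      rw [show ((∑ i, (α i : ℝ) * ℓ i : ℝ) : AddCircle (1 : ℝ))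
          = (QuotientAddGroup.mk' _) (∑ i, (α i : ℝ) * ℓ i) from rfl, map_sum]
      refine Finset.sum_congr rfl fun i _ => ?_
      rw [show ((α i : ℝ) * ℓ i) = α i • ℓ i from (zsmul_eq_mul _ _).symm, map_zsmul]
      rfl
    rw [hx]
    exact AddSubgroup.sum_mem _ fun i _ =>
      AddSubgroup.zsmul_mem _ (AddSubgroup.subset_closure (Set.mem_range_self i)) _
  · rw [AddSubgroup.closure_le]
    rintro x ⟨i, rfl⟩
    rw [SetLike.mem_coe, AddMonoidHom.mem_range]
    refine ⟨Pi.single i 1, ?_⟩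
    have hsum1 : ∑ j, (((Pi.single i (1 : ℤ) : Fin (n + 1) → ℤ) j : ℤ) : ℝ) * ℓ j = ℓ i := by
      rw [Finset.sum_eq_single i]
      · simp
      · intro j _ hj
        simp [Pi.single_apply, hj]
      · intro h
        exact absurd (Finset.mem_univ i) h
    show ((∑ j, (((Pi.single i (1 : ℤ) : Fin (n + 1) → ℤ) j : ℤ) : ℝ) * ℓ j : ℝ)
        : AddCircle (1 : ℝ)) = ((ℓ i : ℝ) : AddCircle (1 : ℝ))
    rw [hsum1]

end CycleAux

/-- For the weighted cycle graph with edge lengths `ℓ₀,…,ℓ_n`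
summing to `1`: `J(G) ≅ (ℤℓ₀ + ⋯ + ℤℓ_n)/ℤ ⊆ ℝ/ℤ`; if all lengths are rational
then `J(G)` is finite; and if the lengths are `ℚ`-linearly independent then `J(G)`
is free abelian of rank `n`. -/
theorem jacobian_cycleGraph (n : ℕ) (ℓ : Fin (n + 1) → ℝ) (hpos : ∀ i, 0 < ℓ i)
    (hsum : ∑ i, ℓ i = 1) :
    Nonempty ((cycleGraph n ℓ hpos).Jac ≃+
      (AddSubgroup.closure (Set.range fun i => ((ℓ i : ℝ) : AddCircle (1 : ℝ))))) ∧
    ((∀ i, ∃ q : ℚ, ℓ i = q) → Finite (cycleGraph n ℓ hpos).Jac) ∧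
    (LinearIndependent ℚ ℓ → Nonempty ((cycleGraph n ℓ hpos).Jac ≃+ (Fin n → ℤ))) := by
  have hker := cg_jacRel_eq n ℓ hpos hsum
  refine ⟨?_, ?_, ?_⟩
  · exact ⟨((QuotientAddGroup.quotientAddEquivOfEq
        (N := @id (AddSubgroup ((cycleGraph n ℓ hpos).E → ℤ)) (cgPhi n ℓ).ker) hker).trans
      (QuotientAddGroup.quotientKerEquivRange (cgPhi n ℓ))).trans
      (AddEquiv.addSubgroupCongr (cgPhi_range n ℓ))⟩
  · intro hq
    choose r hr using hq
    set D : ℕ := ∏ i, (r i).den with hD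
    have hDpos : 0 < D := Finset.prod_pos fun i _ => (r i).pos
    haveI : NeZero D := ⟨hDpos.ne'⟩
    have hint : ∀ i, ∃ zz : ℤ, (D : ℝ) * ℓ i = zz := by
      intro i
      obtain ⟨k, hk⟩ := Finset.dvd_prod_of_mem (fun i => (r i).den) (Finset.mem_univ i)
      rw [← hD] at hk
      have hQ : (D : ℚ) * r i = ((r i).num * k : ℤ) := by
        rw [hk]
        push_cast
        rw [show ((r i).den : ℚ) * (k : ℚ) * r i = (r i * (r i).den) * k by ring,
          Rat.mul_den_eq_num]
      refine ⟨(r i).num * k, ?_⟩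
      rw [hr i, show (D : ℝ) * ((r i : ℚ) : ℝ) = (((D : ℚ) * r i : ℚ) : ℝ) by push_cast; ring,
        hQ]
      push_cast
      ring
    choose z hz using hint
    have hs : Function.Surjective
        (fun v : Fin (n + 1) → ZMod D =>
          (QuotientAddGroup.mk (fun i => ((v i).val : ℤ)) : (cycleGraph n ℓ hpos).Jac)) := by
      intro x
      obtain ⟨α, rfl⟩ := QuotientAddGroup.mk_surjective x
      change Fin (n + 1) → ℤ at α
      refine ⟨fun i => ((α i : ZMod D)), ?_⟩
      show QuotientAddGroup.mk _ = QuotientAddGroup.mk α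
      erw [QuotientAddGroup.eq, hker]
      set β : Fin (n + 1) → ℤ := fun i => (((α i : ZMod D)).val : ℤ) with hβ
      have hdvd : ∀ i, (D : ℤ) ∣ (α i - β i) := by
        intro i
        rw [← ZMod.intCast_zmod_eq_zero_iff_dvd]
        push_cast [hβ]
        simp [ZMod.natCast_val, ZMod.cast_id]
      choose c hc using hdvd
      rw [cgPhi_ker_iff]
      refine ⟨∑ i, c i * z i, ?_⟩
      show ((∑ i, c i * z i : ℤ) : ℝ) = ∑ i, (((-β + α) i : ℤ) : ℝ) * ℓ i
      have hterm : ∀ i, (((-β + α) i : ℤ) : ℝ) * ℓ i = (c i : ℝ) * (z i : ℝ) := by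
        intro i
        have h1 : (-β + α) i = D * c i := by
          have := hc i
          simp only [Pi.add_apply, Pi.neg_apply]
          omega
        rw [h1, ← hz i]
        push_cast
        ring
      rw [Finset.sum_congr rfl fun i _ => hterm i]
      push_cast
      rfl
    exact Finite.of_surjective _ hs
  · intro hli
    set ψ : (Fin (n + 1) → ℤ) →+ (Fin n → ℤ) :=
      { toFun := fun α i => α i.castSucc - α (Fin.last n)
        map_zero' := by funext i; simp
        map_add' := fun a b => by funext i; simp only [Pi.add_apply]; ring } with hψ
    have hψ_apply : ∀ (α : Fin (n + 1) → ℤ) (i : Fin n),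
        ψ α i = α i.castSucc - α (Fin.last n) := fun _ _ => rfl
    have hsurj : Function.Surjective ψ := by
      intro v
      refine ⟨Fin.snoc v 0, ?_⟩
      funext i
      rw [hψ_apply, Fin.snoc_castSucc, Fin.snoc_last, sub_zero]
    have hkk : (cgPhi n ℓ).ker = ψ.ker := by
      apply le_antisymm
      · intro α hα
        obtain ⟨m, hm⟩ := (cgPhi_ker_iff n ℓ α).mp hα
        have h0 := Fintype.linearIndependent_iff.mp hli
        have hconst : ∀ i, α i = m := by
          intro i
          have hz0 : ∑ j, ((α j - m : ℤ) : ℚ) • ℓ j = 0 := by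
            have hterm : ∀ j, ((α j - m : ℤ) : ℚ) • ℓ j
                = (α j : ℝ) * ℓ j - (m : ℝ) * ℓ j := by
              intro j
              rw [Rat.smul_def]
              push_cast
              ring
            rw [Finset.sum_congr rfl fun j _ => hterm j, Finset.sum_sub_distrib,
              ← Finset.mul_sum, hsum, ← hm]
            ring
          have := h0 (fun j => ((α j - m : ℤ) : ℚ)) hz0 i
          have h2 : (α i - m : ℤ) = 0 := by exact_mod_cast this
          omega
        rw [AddMonoidHom.mem_ker]
        funext i
        rw [hψ_apply, hconst, hconst, sub_self]
        rfl
      · intro α hα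
        rw [AddMonoidHom.mem_ker] at hα
        have h1 : ∀ i : Fin n, α i.castSucc - α (Fin.last n) = 0 := by
          intro i
          rw [← hψ_apply α i, hα]
          rfl
        have hconst : ∀ j, α j = α (Fin.last n) := by
          intro j
          induction j using Fin.lastCases with
          | last => rfl
          | cast i => exact sub_eq_zero.mp (h1 i)
        rw [cgPhi_ker_iff]
        refine ⟨α (Fin.last n), ?_⟩
        calc ((α (Fin.last n) : ℤ) : ℝ) = (α (Fin.last n) : ℝ) * ∑ i, ℓ i := by
              rw [hsum, mul_one]
          _ = ∑ i, (α i : ℝ) * ℓ i := by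
              rw [Finset.mul_sum]
              exact Finset.sum_congr rfl fun i _ => by rw [hconst i]
    exact ⟨(QuotientAddGroup.quotientAddEquivOfEq
        (N := @id (AddSubgroup ((cycleGraph n ℓ hpos).E → ℤ)) ψ.ker) (hker.trans hkk)).trans
      (QuotientAddGroup.quotientKerEquivOfSurjective ψ hsurj)⟩
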